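/- Let I be an independent set of a tree T, w ∈ I, and z a neighbor of w such that the token on w is (T_w^z, I ∩ T_w^z)-movable. Then there exists a reconfiguration sequence in T from I to an independent set I' with w ∉ I', of length O(|V(T_w^z)|), in which every intermediate independent set J satisfies J ∩ (T \ T_w^z) = I ∩ (T \ T_w^z). -/

import Mathlib

/-- `I` is an independent set of `G`. -/
def IndepSet {V : Type*} (G : SimpleGraph V) (I : Set V) : Prop :=
  ∀ ⦃u⦄, u ∈ I → ∀ ⦃v⦄, v ∈ I → ¬ G.Adj u v

/-- `B` is obtained from `A` by sliding one token along an edge. -/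
def Slide {V : Type*} (G : SimpleGraph V) (A B : Set V) : Prop :=
  ∃ u v, G.Adj u v ∧ A \ B = {u} ∧ B \ A = {v}

/-- One step of reconfiguration: a slide whose result is independent. -/
def Step {V : Type*} (G : SimpleGraph V) (A B : Set V) : Prop :=
  IndepSet G B ∧ Slide G A B

/-- `I` is reconfigurable to `J` by token sliding. -/
def Reconf {V : Type*} (G : SimpleGraph V) : Set V → Set V → Prop :=
  Relation.ReflTransGen (Step G)

/-- One reconfiguration step restricted to the induced subgraph on `S`. -/
def StepOn {V : Type*} (G : SimpleGraph V) (S : Set V) (A B : Set V) : Prop :=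
  B ⊆ S ∧ IndepSet G B ∧ Slide G A B

/-- Reconfigurability within the induced subgraph on `S`. -/
def ReconfOn {V : Type*} (G : SimpleGraph V) (S : Set V) : Set V → Set V → Prop :=
  Relation.ReflTransGen (StepOn G S)

/-- The token on `u` is `(G, I)`-rigid. -/
def Rigid {V : Type*} (G : SimpleGraph V) (I : Set V) (u : V) : Prop :=
  ∀ J, Reconf G I J → u ∈ J

/-- The token on `u` is rigid for the subgraph induced on `S`, starting from `I ∩ S`. -/
def RigidOn {V : Type*} (G : SimpleGraph V) (S I : Set V) (u : V) : Prop :=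
  ∀ J, ReconfOn G S (I ∩ S) J → u ∈ J

/-- The set `R(I)` of vertices carrying `(G, I)`-rigid tokens. -/
def RigidSet {V : Type*} (G : SimpleGraph V) (I : Set V) : Set V :=
  {u ∈ I | Rigid G I u}

/-- For an edge `{u, v}` of a tree `G`, `SubtreeSide G u v` is the vertex set of the
subtree `T_v^u`: the component of `v` after removing the edge, i.e. vertices strictly
closer to `v` than to `u`. -/
def SubtreeSide {V : Type*} (G : SimpleGraph V) (u v : V) : Set V :=
  {x | G.dist x v < G.dist x u}

/-- The closed neighborhood `N[R]` of a vertex subset `R`. -/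
def ClosedNbhd {V : Type*} (G : SimpleGraph V) (R : Set V) : Set V :=
  R ∪ {x | ∃ r ∈ R, G.Adj r x}

open SimpleGraph Walk

section TreeLemmas
variable {V : Type} [DecidableEq V] {G : SimpleGraph V}



lemma path_length_eq (hG : G.IsTree) {x y : V} {p : G.Walk x y} (hp : p.IsPath) :
    p.length = G.dist x y := by
  obtain ⟨q, hq, hlen⟩ := hG.isConnected.exists_path_of_dist x y
  rw [← hlen]
  exact congrArg Walk.length ((hG.existsUnique_path x y).unique hp hq)

lemma edge_walk_isPath {u v : V} (h : G.Adj u v) : (Walk.cons h Walk.nil).IsPath := by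
  rw [Walk.isPath_def]
  simp [h.ne]

lemma path_concat_isPath {x u v : V} {p : G.Walk x u} (hp : p.IsPath) (h : G.Adj u v)
    (hv : v ∉ p.support) : (p.concat h).IsPath := by
  rw [Walk.isPath_def, Walk.support_concat]
  exact List.Nodup.append hp.support_nodup (by simp) (by intro a ha hav; simp at hav; exact hv (hav ▸ ha))

/-- C1 : membership in a subtree side via the unique path. -/
lemma mem_side_iff (hG : G.IsTree) {u v x : V} (huv : G.Adj u v) {p : G.Walk x u}
    (hp : p.IsPath) : x ∈ SubtreeSide G u v ↔ v ∈ p.support := by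
  constructor
  · intro hx
    by_contra hv
    have hq : (p.concat huv).IsPath := path_concat_isPath hp huv hv
    have : G.dist x v = p.length + 1 := by
      rw [← path_length_eq hG hq, Walk.length_concat]
    have hxu : G.dist x u = p.length := (path_length_eq hG hp).symm
    simp only [SubtreeSide, Set.mem_setOf_eq] at hx
    omega
  · intro hv
    have h1 : (p.takeUntil v hv).IsPath := hp.takeUntil hv
    have h2 : (p.dropUntil v hv).IsPath := hp.dropUntil hv
    have h3 : p.dropUntil v hv = Walk.cons huv.symm Walk.nil :=
      (hG.existsUnique_path v u).unique h2 (edge_walk_isPath huv.symm)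
    have h4 := congrArg Walk.length (p.take_spec hv)
    rw [Walk.length_append, h3] at h4
    simp only [Walk.length_cons, Walk.length_nil] at h4
    have h5 : G.dist x v = (p.takeUntil v hv).length := (path_length_eq hG h1).symm
    have h6 : G.dist x u = p.length := (path_length_eq hG hp).symm
    simp only [SubtreeSide, Set.mem_setOf_eq]
    omega

lemma not_mem_side_iff (hG : G.IsTree) {u v x : V} (huv : G.Adj u v) :
    x ∉ SubtreeSide G u v ↔ x ∈ SubtreeSide G v u := by
  obtain ⟨p, hp⟩ := (hG.existsUnique_path x u).exists
  rw [mem_side_iff hG huv hp]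
  constructor
  · intro hv
    have hq : (p.concat huv).IsPath := path_concat_isPath hp huv hv
    rw [mem_side_iff hG huv.symm hq]
    simp [Walk.support_concat, Walk.end_mem_support]
  · intro hx hv
    have h1 : G.dist x v < G.dist x u := (mem_side_iff hG huv hp).2 hv
    have h2 : G.dist x u < G.dist x v := hx
    omega

lemma mem_side_self {u v : V} (hG : G.IsTree) (huv : G.Adj u v) : v ∈ SubtreeSide G u v := by
  simp only [SubtreeSide, Set.mem_setOf_eq, SimpleGraph.dist_self]
  have : G.dist v u = 1 := by
    rw [SimpleGraph.dist_comm]; exact (SimpleGraph.dist_eq_one_iff_adj).2 huv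
  omega

lemma base_not_mem_side {u v : V} : u ∉ SubtreeSide G u v := by
  simp [SubtreeSide, SimpleGraph.dist_self]

lemma dist_succ_of_mem_side (hG : G.IsTree) {u v x : V} (huv : G.Adj u v)
    (hx : x ∈ SubtreeSide G u v) : G.dist x u = G.dist x v + 1 := by
  have h1 : G.dist x v < G.dist x u := hx
  have h2 : G.dist x u ≤ G.dist x v + G.dist v u :=
    hG.isConnected.dist_triangle
  have h3 : G.dist v u = 1 := by
    rw [SimpleGraph.dist_comm]; exact (SimpleGraph.dist_eq_one_iff_adj).2 huv
  omega

/-- Helper: splitting the unique path. -/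
lemma split_helper (hG : G.IsTree) {v d x y : V} (hdv : G.Adj d v) {p : G.Walk x v}
    (hp : p.IsPath) (hd : d ∈ p.support) (hy : y ∈ p.support) (hyv : y ≠ v) :
    G.dist x v = G.dist x y + G.dist y d + 1 := by
  have hdvne : d ≠ v := hdv.ne
  set p1 := p.takeUntil d hd with hp1def
  set p2 := p.dropUntil d hd with hp2def
  have hp1 : p1.IsPath := hp.takeUntil hd
  have hp2 : p2.IsPath := hp.dropUntil hd
  have h3 : p2 = Walk.cons hdv Walk.nil :=
    (hG.existsUnique_path d v).unique hp2 (edge_walk_isPath hdv)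
  have hlen : p.length = p1.length + p2.length := by
    conv_lhs => rw [← p.take_spec hd]
    rw [Walk.length_append]
  have hp2len : p2.length = 1 := by rw [h3]; simp
  -- y is in p1.support
  have hysup : y ∈ p1.support := by
    have hsup : p.support = p1.support ++ p2.support.tail := by
      conv_lhs => rw [← p.take_spec hd]
      rw [Walk.support_append]
    have hp2sup : p2.support.tail = [v] := by rw [h3]; simp
    rw [hsup, hp2sup, List.mem_append] at hy
    rcases hy with h | h
    · exact h
    · simp at h; exact absurd h hyv
  have hyd : y ∈ p1.support := hysup
  have h4 : p1.length = (p1.takeUntil y hysup).length + (p1.dropUntil y hysup).length := by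
    conv_lhs => rw [← p1.take_spec hysup]
    rw [Walk.length_append]
  have h5 : (p1.takeUntil y hysup).length = G.dist x y :=
    path_length_eq hG (hp1.takeUntil hysup)
  have h6 : (p1.dropUntil y hysup).length = G.dist y d :=
    path_length_eq hG (hp1.dropUntil hysup)
  have h7 : p.length = G.dist x v := path_length_eq hG hp
  omega

lemma side_disjoint (hG : G.IsTree) {v d1 d2 : V} (h1 : G.Adj v d1) (h2 : G.Adj v d2)
    (hne : d1 ≠ d2) : SubtreeSide G v d1 ∩ SubtreeSide G v d2 = ∅ := by
  ext x
  simp only [Set.mem_inter_iff, Set.mem_empty_iff_false, iff_false, not_and]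
  intro hx1 hx2
  obtain ⟨p, hp⟩ := (hG.existsUnique_path x v).exists
  have hd1 : d1 ∈ p.support := (mem_side_iff hG h1 hp).1 hx1
  have hd2 : d2 ∈ p.support := (mem_side_iff hG h2 hp).1 hx2
  have e1 := split_helper hG h1.symm hp hd1 hd2 h2.ne'
  have e2 : G.dist x v = G.dist x d2 + 1 := dist_succ_of_mem_side hG h2 hx2
  have : G.dist d2 d1 = 0 := by omega
  have hr : G.Reachable d2 d1 := by
    obtain ⟨q, hq⟩ := (hG.existsUnique_path d2 d1).exists
    exact ⟨q⟩
  exact hne ((hr.dist_eq_zero_iff.1 this).symm)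

lemma side_nested (hG : G.IsTree) {w v d : V} (hwv : G.Adj w v) (hvd : G.Adj v d)
    (hdw : d ≠ w) : SubtreeSide G v d ⊆ SubtreeSide G w v := by
  intro x hx
  by_contra hxn
  have hx2 : x ∈ SubtreeSide G v w := (not_mem_side_iff hG hwv).1 hxn
  obtain ⟨p, hp⟩ := (hG.existsUnique_path x v).exists
  have hd : d ∈ p.support := (mem_side_iff hG hvd hp).1 hx
  have hw : w ∈ p.support := (mem_side_iff hG hwv.symm hp).1 hx2
  have e1 := split_helper hG hvd.symm hp hd hw hwv.ne
  have e2 : G.dist x v = G.dist x w + 1 := dist_succ_of_mem_side hG hwv.symm hx2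
  have h0 : G.dist w d = 0 := by omega
  have hr : G.Reachable w d := by
    obtain ⟨q, hq⟩ := (hG.existsUnique_path w d).exists
    exact ⟨q⟩
  exact hdw ((hr.dist_eq_zero_iff.1 h0)).symm

lemma not_mem_side_of_adj (hG : G.IsTree) {w v d : V} (hwv : G.Adj w v) (hvd : G.Adj v d)
    (hdw : d ≠ w) : w ∉ SubtreeSide G v d := by
  intro hw
  have h1 : G.dist w d < G.dist w v := hw
  have h2 : G.dist w v = 1 := SimpleGraph.dist_eq_one_iff_adj.2 hwv
  have h0 : G.dist w d = 0 := by omega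
  have hr : G.Reachable w d := by
    obtain ⟨q, hq⟩ := (hG.existsUnique_path w d).exists
    exact ⟨q⟩
  exact hdw ((hr.dist_eq_zero_iff.1 h0)).symm

/-- crossing lemma: the only edge leaving `SubtreeSide G z w` is `(w, z)`. -/
lemma crossing (hG : G.IsTree) {w z x y : V} (hwz : G.Adj w z)
    (hx : x ∈ SubtreeSide G z w) (hy : y ∉ SubtreeSide G z w) (hxy : G.Adj x y) :
    x = w ∧ y = z := by
  obtain ⟨p, hp⟩ := (hG.existsUnique_path y z).exists
  have hwp : w ∉ p.support := fun hwp => hy ((mem_side_iff hG hwz.symm hp).2 hwp)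
  have hxw : x = w := by
    by_cases hxp : x ∈ p.support
    · exfalso
      have hq : (p.dropUntil x hxp).IsPath := hp.dropUntil hxp
      have := (mem_side_iff hG hwz.symm hq).1 hx
      exact hwp (p.support_dropUntil_subset hxp this)
    · have hq : (Walk.cons hxy p).IsPath := hp.cons hxp
      have := (mem_side_iff hG hwz.symm hq).1 hx
      simp only [Walk.support_cons, List.mem_cons] at this
      rcases this with h | h
      · exact h.symm
      · exact absurd h hwp
  subst hxw
  have h1 : G.dist y x = 1 := by
    rw [SimpleGraph.dist_comm]; exact SimpleGraph.dist_eq_one_iff_adj.2 hxy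
  have h2 : x ∈ SubtreeSide G z x := hx
  have hy2 : y ∈ SubtreeSide G x z := (not_mem_side_iff hG hwz.symm).1 hy
  have h3 : G.dist y x = G.dist y z + 1 := dist_succ_of_mem_side hG hwz hy2
  have h0 : G.dist y z = 0 := by omega
  have hr : G.Reachable y z := by
    obtain ⟨q, hq⟩ := (hG.existsUnique_path y z).exists
    exact ⟨q⟩
  exact ⟨rfl, hr.dist_eq_zero_iff.1 h0⟩



end TreeLemmas

section ReconfLemmas
variable {V : Type} [DecidableEq V] {G : SimpleGraph V}

lemma indep_mono {I J : Set V} (h : IndepSet G I) (hs : J ⊆ I) : IndepSet G J :=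
  fun _ hu _ hv => h (hs hu) (hs hv)

lemma slide_mem_iff {A B : Set V} {u v : V} (h1 : A \ B = {u}) (h2 : B \ A = {v})
    {x : V} (hxu : x ≠ u) (hxv : x ≠ v) : x ∈ A ↔ x ∈ B := by
  constructor
  · intro hx
    by_contra hB
    have : x ∈ A \ B := ⟨hx, hB⟩
    rw [h1] at this; exact hxu this
  · intro hx
    by_contra hA
    have : x ∈ B \ A := ⟨hx, hA⟩
    rw [h2] at this; exact hxv this

/-- The augmented step relation: a step inside `S` that keeps the token on `w`. -/
def Aug {V : Type} (G : SimpleGraph V) (S : Set V) (w : V) (X Y : Set V) : Prop :=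
  StepOn G S X Y ∧ w ∈ X ∧ w ∈ Y ∧ IndepSet G X

lemma first_exit {S A0 J : Set V} {w : V}
    (h : Relation.ReflTransGen (StepOn G S) A0 J) (hw0 : w ∈ A0) (hind : IndepSet G A0)
    (hwJ : w ∉ J) :
    ∃ A v, Relation.ReflTransGen (Aug G S w) A0 A ∧ w ∈ A ∧ IndepSet G A ∧ G.Adj w v ∧
      v ∈ S ∧ v ∉ A ∧ ∀ d, G.Adj v d → d ≠ w → d ∉ A := by
  induction h using Relation.ReflTransGen.head_induction_on with
  | refl => exact absurd hw0 hwJ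
  | head hstep hrest ih =>
    rename_i X Y
    obtain ⟨hYS, hindY, u, v, hadj, h1, h2⟩ := hstep
    by_cases hwY : w ∈ Y
    · obtain ⟨A, vv, hch, hrest'⟩ := ih hwY hindY
      exact ⟨A, vv, Relation.ReflTransGen.head
        ⟨⟨hYS, hindY, u, v, hadj, h1, h2⟩, hw0, hwY, hind⟩ hch, hrest'⟩
    · have huw : u = w := by
        have : w ∈ X \ Y := ⟨hw0, hwY⟩
        rw [h1] at this; exact this.symm
      subst huw
      have hvY : v ∈ Y := by
        have : v ∈ Y \ X := by rw [h2]; rfl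
        exact this.1
      have hvX : v ∉ X := by
        have : v ∈ Y \ X := by rw [h2]; rfl
        exact this.2
      refine ⟨X, v, Relation.ReflTransGen.refl, hw0, hind, hadj, hYS hvY, hvX, ?_⟩
      intro d hd hdw hdX
      have hdY : d ∈ Y := by
        rw [← slide_mem_iff h1 h2 hdw (fun h => hvX (h ▸ hdX))]
        exact hdX
      exact hindY hvY hdY hd

lemma restrict (hG : G.IsTree) {S : Set V} {w c d : V} (hwc : G.Adj w c) (hcd : G.Adj c d)
    (hdw : d ≠ w) {A0 A : Set V} (h : Relation.ReflTransGen (Aug G S w) A0 A) :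
    Relation.ReflTransGen (StepOn G (SubtreeSide G c d)) (A0 ∩ SubtreeSide G c d)
      (A ∩ SubtreeSide G c d) := by
  set T := SubtreeSide G c d with hT
  induction h with
  | refl => exact Relation.ReflTransGen.refl
  | tail hab hbc ih =>
    rename_i X Y
    obtain ⟨⟨hYS, hindY, u, u', hadj, h1, h2⟩, hwX, hwY, hindX⟩ := hbc
    have hmu : u ∈ X \ Y := by rw [h1]; rfl
    have hmu' : u' ∈ Y \ X := by rw [h2]; rfl
    have huX : u ∈ X := hmu.1
    have huY : u ∉ Y := hmu.2
    have hu'Y : u' ∈ Y := hmu'.1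
    have hu'X : u' ∉ X := hmu'.2
    by_cases hu : u ∈ T
    · have hu' : u' ∈ T := by
        by_contra hu'
        obtain ⟨rfl, rfl⟩ := crossing hG hcd.symm hu hu' hadj
        exact hindY hwY hu'Y hwc
      refine Relation.ReflTransGen.tail ih ⟨Set.inter_subset_right, indep_mono hindY
        Set.inter_subset_left, u, u', hadj, ?_, ?_⟩
      · ext x
        simp only [Set.mem_diff, Set.mem_inter_iff, Set.mem_singleton_iff]
        constructor
        · rintro ⟨⟨hxX, hxT⟩, hx⟩
          have : x ∉ Y := fun hxY => hx ⟨hxY, hxT⟩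
          have : x ∈ X \ Y := ⟨hxX, this⟩
          rw [h1] at this; exact this
        · rintro rfl
          exact ⟨⟨huX, hu⟩, fun hx => huY hx.1⟩
      · ext x
        simp only [Set.mem_diff, Set.mem_inter_iff, Set.mem_singleton_iff]
        constructor
        · rintro ⟨⟨hxY, hxT⟩, hx⟩
          have : x ∉ X := fun hxX => hx ⟨hxX, hxT⟩
          have : x ∈ Y \ X := ⟨hxY, this⟩
          rw [h2] at this; exact this
        · rintro rfl
          exact ⟨⟨hu'Y, hu'⟩, fun hx => hu'X hx.1⟩
    · have hu' : u' ∉ T := by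
        intro hu'
        obtain ⟨rfl, rfl⟩ := crossing hG hcd.symm hu' hu hadj.symm
        exact hindX hwX huX hwc
      have heq : X ∩ T = Y ∩ T := by
        ext x
        simp only [Set.mem_inter_iff]
        constructor
        · rintro ⟨hxX, hxT⟩
          refine ⟨?_, hxT⟩
          rw [← slide_mem_iff h1 h2 (fun h => hu (h ▸ hxT)) (fun h => hu' (h ▸ hxT))]
          exact hxX
        · rintro ⟨hxY, hxT⟩
          refine ⟨?_, hxT⟩
          rw [slide_mem_iff h1 h2 (fun h => hu (h ▸ hxT)) (fun h => hu' (h ▸ hxT))]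
          exact hxY
      rwa [heq] at ih

lemma chain_indep : ∀ (L : List (Set V)), L.Chain' (Step G) → ∀ {I : Set V},
    L.head? = some I → IndepSet G I → ∀ J ∈ L, IndepSet G J := by
  intro L
  induction L with
  | nil => simp
  | cons a t ih =>
    intro hch I hh hI J hJ
    have ha : a = I := by simpa using hh
    subst ha
    rcases List.mem_cons.1 hJ with rfl | hJt
    · exact hI
    · cases t with
      | nil => simp at hJt
      | cons b t' =>
        have hst : Step G a b := (List.isChain_cons_cons.1 hch).1
        exact ih (List.isChain_cons_cons.1 hch).2 rfl hst.1 J hJt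

theorem mem_of_getLast?' {α : Type*} {l : List α} {a : α} (h : l.getLast? = some a) : a ∈ l := by
  obtain ⟨h1, rfl⟩ := List.mem_getLast?_eq_getLast (Option.mem_def.2 h)
  exact List.getLast_mem h1

lemma glue {R : Set V → Set V → Prop} {L1 L2 : List (Set V)} {Y : Set V}
    (h1 : L1.Chain' R) (h2 : L2.Chain' R) (hY : L1.getLast? = some Y)
    (hY2 : L2.head? = some Y) :
    (L1 ++ L2.tail).Chain' R ∧ (L1 ++ L2.tail).head? = L1.head? ∧
    (L1 ++ L2.tail).getLast? = L2.getLast? ∧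
    (L1 ++ L2.tail).length + 1 = L1.length + L2.length := by
  cases L2 with
  | nil => simp at hY2
  | cons b t =>
    have hb : b = Y := by simpa using hY2
    subst hb
    refine ⟨?_, ?_, ?_, ?_⟩
    · refine h1.append (List.isChain_cons.1 h2).2 ?_
      intro x hx y hy
      have hxY : x = b := by rw [hY] at hx; exact (by simpa using hx : b = x).symm
      subst hxY
      exact (List.isChain_cons.1 h2).1 y hy
    · cases L1 with
      | nil => simp at hY
      | cons a l1 => simp
    · cases t with
      | nil => simpa using hY
      | cons c t' =>
        rw [List.getLast?_append_of_ne_nil _ (by simp : (b :: c :: t').tail ≠ [])]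
        simp
    · simp; omega
lemma inter_compl_iff {A B T : Set V} (h : A ∩ Tᶜ = B ∩ Tᶜ) {x : V} (hx : x ∉ T) :
    x ∈ A ↔ x ∈ B := by
  have := Set.ext_iff.1 h x
  simpa [hx] using this

end ReconfLemmas

section Main
variable {V : Type} [Fintype V] [DecidableEq V] {G : SimpleGraph V}

lemma sum_ncard_le (hG : G.IsTree) {v : V} :
    ∀ (ds : List V), ds.Nodup → (∀ d ∈ ds, G.Adj v d) →
    ∀ (U : Set V), (∀ d ∈ ds, SubtreeSide G v d ⊆ U) →
    (ds.map fun d => (SubtreeSide G v d).ncard).sum ≤ U.ncard := by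
  intro ds
  induction ds with
  | nil => intro _ _ U _; simp
  | cons d rest ih =>
    intro hnd hadj U hsub
    simp only [List.map_cons, List.sum_cons]
    have hd : SubtreeSide G v d ⊆ U := hsub d (List.mem_cons_self)
    have hrest : ∀ d' ∈ rest, SubtreeSide G v d' ⊆ U \ SubtreeSide G v d := by
      intro d' hd' x hx
      have hne : d ≠ d' := fun h => (List.nodup_cons.1 hnd).1 (h ▸ hd')
      refine ⟨hsub d' (List.mem_cons_of_mem d hd') hx, fun hx2 => ?_⟩
      have := side_disjoint hG (hadj d (List.mem_cons_self))
        (hadj d' (List.mem_cons_of_mem d hd')) hne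
      exact absurd (Set.mem_inter hx2 hx) (by rw [this]; exact id)
    have h1 := ih (List.nodup_cons.1 hnd).2 (fun d' hd' => hadj d' (List.mem_cons_of_mem d hd'))
      (U \ SubtreeSide G v d) hrest
    have h2 : (U \ SubtreeSide G v d).ncard + (SubtreeSide G v d).ncard = U.ncard :=
      Set.ncard_diff_add_ncard_of_subset hd (Set.toFinite U)
    omega

/-- Conclusion form of the main induction, for the pair `(w, z)`. -/
def VacGoal (G : SimpleGraph V) (w : V) (T : Set V) (I : Set V) : Prop :=
  ∃ L : List (Set V), L.Chain' (Step G) ∧ L.head? = some I ∧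
    (∃ I' : Set V, L.getLast? = some I' ∧ w ∉ I') ∧
    (∀ J ∈ L, J ∩ Tᶜ = I ∩ Tᶜ) ∧ 1 ≤ L.length ∧ L.length ≤ T.ncard

lemma vacate_children (hG : G.IsTree) {v w : V} (hwv : G.Adj w v) :
    ∀ ds : List V, ds.Nodup →
    ∀ I0 : Set V, IndepSet G I0 →
    (∀ d ∈ ds, G.Adj v d ∧ d ≠ w) →
    (∀ d ∈ ds, d ∈ I0 → ¬ RigidOn G (SubtreeSide G v d) I0 d) →
    (∀ d ∈ ds, ∀ I' : Set V, IndepSet G I' → d ∈ I' →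
        ¬ RigidOn G (SubtreeSide G v d) I' d → VacGoal G d (SubtreeSide G v d) I') →
    ∃ L : List (Set V), ∃ Ifin : Set V, L.Chain' (Step G) ∧ L.head? = some I0 ∧
      L.getLast? = some Ifin ∧ (∀ d ∈ ds, d ∉ Ifin) ∧
      (∀ J ∈ L, ∀ x : V, (∀ d ∈ ds, x ∉ SubtreeSide G v d) → (x ∈ J ↔ x ∈ I0)) ∧
      1 ≤ L.length ∧ L.length ≤ 1 + (ds.map fun d => (SubtreeSide G v d).ncard).sum := by
  intro ds
  induction ds with
  | nil =>
    intro _ I0 _ _ _ _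
    exact ⟨[I0], I0, List.isChain_singleton _, rfl, rfl, by simp, by intro J hJ x _; simp at hJ; rw [hJ],
      by simp, by simp⟩
  | cons d rest ih =>
    intro hnd I0 hind0 hprops hnonrig hrec
    obtain ⟨hadj, hdw⟩ := hprops d (List.mem_cons_self)
    have hdisj : ∀ d' ∈ rest, ∀ x : V, x ∈ SubtreeSide G v d' → x ∉ SubtreeSide G v d := by
      intro d' hd' x hx hx2
      have hne : d ≠ d' := fun h => (List.nodup_cons.1 hnd).1 (h ▸ hd')
      have := side_disjoint hG hadj (hprops d' (List.mem_cons_of_mem d hd')).1 hne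
      exact absurd (Set.mem_inter hx2 hx) (by rw [this]; exact id)
    by_cases hdI : d ∈ I0
    · -- vacate d's subtree first
      obtain ⟨L1, hch1, hhd1, ⟨I1, hlast1, hdI1⟩, hout1, hlen1a, hlen1b⟩ :=
        hrec d (List.mem_cons_self) I0 hind0 hdI
          (hnonrig d (List.mem_cons_self) hdI)
      have hI1mem : I1 ∈ L1 := mem_of_getLast?' hlast1
      have hindI1 : IndepSet G I1 := chain_indep L1 hch1 hhd1 hind0 I1 hI1mem
      have hI1eq : ∀ x : V, x ∉ SubtreeSide G v d → (x ∈ I1 ↔ x ∈ I0) :=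
        fun x hx => inter_compl_iff (hout1 I1 hI1mem) hx
      -- transfer hypotheses to I1
      have htrans : ∀ d' ∈ rest, d' ∈ I1 ↔ d' ∈ I0 := by
        intro d' hd'
        exact hI1eq d' (hdisj d' hd' d' (mem_side_self hG (hprops d'
          (List.mem_cons_of_mem d hd')).1))
      have hrigtrans : ∀ d' ∈ rest, RigidOn G (SubtreeSide G v d') I1 d' ↔
          RigidOn G (SubtreeSide G v d') I0 d' := by
        intro d' hd'
        have hEq : I1 ∩ SubtreeSide G v d' = I0 ∩ SubtreeSide G v d' := by
          ext x
          simp only [Set.mem_inter_iff]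
          constructor
          · rintro ⟨h1, h2⟩; exact ⟨(hI1eq x (hdisj d' hd' x h2)).1 h1, h2⟩
          · rintro ⟨h1, h2⟩; exact ⟨(hI1eq x (hdisj d' hd' x h2)).2 h1, h2⟩
        unfold RigidOn
        rw [hEq]
      obtain ⟨L2, Ifin, hch2, hhd2, hlast2, hout2, hagree2, hlen2a, hlen2b⟩ :=
        ih (List.nodup_cons.1 hnd).2 I1 hindI1
          (fun d' hd' => hprops d' (List.mem_cons_of_mem d hd'))
          (by
            intro d' hd' h hrig
            exact hnonrig d' (List.mem_cons_of_mem d hd') ((htrans d' hd').1 h)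
              ((hrigtrans d' hd').1 hrig))
          (fun d' hd' => hrec d' (List.mem_cons_of_mem d hd'))
      obtain ⟨gch, ghd, glast, glen⟩ := glue hch1 hch2 hlast1 hhd2
      refine ⟨L1 ++ L2.tail, Ifin, gch, by rw [ghd]; exact hhd1, by rw [glast]; exact hlast2,
        ?_, ?_, ?_, ?_⟩
      · intro d' hd'
        rcases List.mem_cons.1 hd' with rfl | hd'
        · intro hdf
          exact hdI1 ((hagree2 Ifin (mem_of_getLast?' hlast2) d'
            (fun e he hx => hdisj e he d' hx (mem_side_self hG hadj))).1 hdf)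
        · exact hout2 d' hd'
      · intro J hJ x hx
        rcases List.mem_append.1 hJ with hJ1 | hJ2
        · exact inter_compl_iff (hout1 J hJ1) (hx d (List.mem_cons_self))
        · have hJL2 : J ∈ L2 := List.mem_of_mem_tail hJ2
          have h1 := hagree2 J hJL2 x (fun e he => hx e (List.mem_cons_of_mem d he))
          have h2 := hI1eq x (hx d (List.mem_cons_self))
          rw [h1, h2]
      · omega
      · simp only [List.map_cons, List.sum_cons]
        omega
    · -- d not occupied: nothing to do for d
      obtain ⟨L, Ifin, hch, hhd, hlast, hout, hagree, hlen1, hlen2⟩ :=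
        ih (List.nodup_cons.1 hnd).2 I0 hind0
          (fun d' hd' => hprops d' (List.mem_cons_of_mem d hd'))
          (fun d' hd' => hnonrig d' (List.mem_cons_of_mem d hd'))
          (fun d' hd' => hrec d' (List.mem_cons_of_mem d hd'))
      refine ⟨L, Ifin, hch, hhd, hlast, ?_, ?_, hlen1, ?_⟩
      · intro d' hd'
        rcases List.mem_cons.1 hd' with rfl | hd'
        · intro hdIfin
          have : d' ∈ I0 := (hagree Ifin (mem_of_getLast?' hlast) d'
            (fun e he hx => hdisj e he d' hx (mem_side_self hG hadj))).1 hdIfin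
          exact hdI this
        · exact hout d' hd'
      · intro J hJ x hx
        exact hagree J hJ x (fun e he => hx e (List.mem_cons_of_mem d he))
      · simp only [List.map_cons, List.sum_cons]
        omega

end Main

lemma main_vacate : ∀ n : ℕ, ∀ (V : Type) [Fintype V] (G : SimpleGraph V), G.IsTree →
    ∀ w z : V, G.Adj w z → ∀ I : Set V, IndepSet G I → w ∈ I →
    ¬ RigidOn G (SubtreeSide G z w) I w → (SubtreeSide G z w).ncard ≤ n →
    VacGoal G w (SubtreeSide G z w) I := by
  intro n
  induction n using Nat.strong_induction_on with
  | _ n IH =>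
  intro V _ G hG w z hwz I hI hwI hnr hn
  classical
  set S := SubtreeSide G z w with hS
  have hwS : w ∈ S := mem_side_self hG hwz.symm
  have hzS : z ∉ S := base_not_mem_side
  have hindIS : IndepSet G (I ∩ S) := indep_mono hI Set.inter_subset_left
  rw [RigidOn] at hnr
  push_neg at hnr
  obtain ⟨J, hRJ, hwJ⟩ := hnr
  obtain ⟨A, v, hchain, hwA, hindA, hAdjwv, hvS, hvA, hnbr⟩ :=
    first_exit hRJ ⟨hwI, hwS⟩ hindIS hwJ
  have hvz : v ≠ z := fun h => hzS (h ▸ hvS)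
  have hTsubS : ∀ d : V, G.Adj v d → d ≠ w → SubtreeSide G v d ⊆ S :=
    fun d h1 h2 => (side_nested hG hAdjwv h1 h2).trans (side_nested hG hwz.symm hAdjwv hvz)
  set Dset : Set V := {d | G.Adj v d ∧ d ≠ w ∧ d ∈ I} with hDset
  set ds : List V := Dset.toFinite.toFinset.toList with hds
  have hds_mem : ∀ d : V, d ∈ ds ↔ (G.Adj v d ∧ d ≠ w ∧ d ∈ I) := by
    intro d; rw [hds, Finset.mem_toList, Set.Finite.mem_toFinset]; rfl
  have hds_nodup : ds.Nodup := Finset.nodup_toList _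
  have hnonrig : ∀ d ∈ ds, d ∈ I → ¬ RigidOn G (SubtreeSide G v d) I d := by
    intro d hd _ hrig
    obtain ⟨hadj, hdw, hdI⟩ := (hds_mem d).1 hd
    have hres := restrict hG hAdjwv hadj hdw hchain
    have hIS : (I ∩ S) ∩ SubtreeSide G v d = I ∩ SubtreeSide G v d := by
      ext x
      simp only [Set.mem_inter_iff]
      exact ⟨fun h => ⟨h.1.1, h.2⟩, fun h => ⟨⟨h.1, hTsubS d hadj hdw h.2⟩, h.2⟩⟩
    rw [hIS] at hres
    have := hrig (A ∩ SubtreeSide G v d) hres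
    exact hnbr d hadj hdw this.1
  have hrec : ∀ d ∈ ds, ∀ I' : Set V, IndepSet G I' → d ∈ I' →
      ¬ RigidOn G (SubtreeSide G v d) I' d → VacGoal G d (SubtreeSide G v d) I' := by
    intro d hd I' h1 h2 h3
    obtain ⟨hadj, hdw, hdI⟩ := (hds_mem d).1 hd
    have hssub : SubtreeSide G v d ⊂ S :=
      ⟨hTsubS d hadj hdw, fun hs => not_mem_side_of_adj hG hAdjwv hadj hdw (hs hwS)⟩
    have hlt : (SubtreeSide G v d).ncard < n :=
      lt_of_lt_of_le (Set.ncard_lt_ncard hssub (Set.toFinite S)) hn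
    exact IH _ hlt V G hG d v hadj.symm I' h1 h2 h3 le_rfl
  obtain ⟨La, Ifin, hch, hhead, hlast, hout, hagree, hlen1, hlenle⟩ :=
    vacate_children hG hAdjwv ds hds_nodup I hI
      (fun d hd => ⟨((hds_mem d).1 hd).1, ((hds_mem d).1 hd).2.1⟩) hnonrig hrec
  have hIfinL : Ifin ∈ La := mem_of_getLast?' hlast
  have hindIfin : IndepSet G Ifin := chain_indep La hch hhead hI Ifin hIfinL
  have hxw_out : ∀ d ∈ ds, w ∉ SubtreeSide G v d := by
    intro d hd
    obtain ⟨hadj, hdw, _⟩ := (hds_mem d).1 hd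
    exact not_mem_side_of_adj hG hAdjwv hadj hdw
  have hwIfin : w ∈ Ifin := (hagree Ifin hIfinL w hxw_out).2 hwI
  have hvI : v ∉ I := fun hv => hI hwI hv hAdjwv
  have hvout : ∀ d ∈ ds, v ∉ SubtreeSide G v d := fun d _ => base_not_mem_side
  have hvIfin : v ∉ Ifin := fun hv => hvI ((hagree Ifin hIfinL v hvout).1 hv)
  have hnbrIfin : ∀ d, G.Adj v d → d ≠ w → d ∉ Ifin := by
    intro d h1 h2 hd
    by_cases hdds : d ∈ ds
    · exact hout d hdds hd
    · have hdI : d ∉ I := fun hdI => hdds ((hds_mem d).2 ⟨h1, h2, hdI⟩)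
      apply hdI
      refine (hagree Ifin hIfinL d ?_).1 hd
      intro e he hx
      obtain ⟨hadje, hew, heI⟩ := (hds_mem e).1 he
      have hne : e ≠ d := fun h => hdds (h ▸ he)
      have hdisj := side_disjoint hG hadje h1 hne
      exact absurd (Set.mem_inter hx (mem_side_self hG h1)) (by rw [hdisj]; exact id)
  set B : Set V := insert v (Ifin \ {w}) with hB
  have hwvne : w ≠ v := hAdjwv.ne
  have hwB : w ∉ B := by
    intro h
    rcases Set.mem_insert_iff.1 h with h | h
    · exact hwvne h
    · exact h.2 rfl
  have hstep : Step G Ifin B := by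
    constructor
    · intro a ha b hb hab
      rcases Set.mem_insert_iff.1 ha with h1 | h1
      · rcases Set.mem_insert_iff.1 hb with h2 | h2
        · rw [h1, h2] at hab
          exact hab.ne rfl
        · rw [h1] at hab
          exact hnbrIfin b hab (fun h => h2.2 h) h2.1
      · rcases Set.mem_insert_iff.1 hb with h2 | h2
        · rw [h2] at hab
          exact hnbrIfin a hab.symm (fun h => h1.2 h) h1.1
        · exact hindIfin h1.1 h2.1 hab
    · refine ⟨w, v, hAdjwv, ?_, ?_⟩
      · ext x
        constructor
        · rintro ⟨hx1, hx2⟩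
          by_contra hxw
          exact hx2 (Set.mem_insert_iff.2 (Or.inr ⟨hx1, fun hh => hxw hh⟩))
        · intro hx
          have hxw : x = w := hx
          subst hxw
          exact ⟨hwIfin, hwB⟩
      · ext x
        constructor
        · rintro ⟨hx1, hx2⟩
          rcases Set.mem_insert_iff.1 hx1 with h | h
          · exact h
          · exact absurd h.1 hx2
        · intro hx
          have hxv : x = v := hx
          subst hxv
          exact ⟨Set.mem_insert _ _, hvIfin⟩
  have houtS : ∀ K ∈ La, K ∩ Sᶜ = I ∩ Sᶜ := by
    intro K hK
    ext x
    simp only [Set.mem_inter_iff, Set.mem_compl_iff]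
    by_cases hxS : x ∈ S
    · simp [hxS]
    · have hx := hagree K hK x (fun d hd hxd =>
        hxS (hTsubS d ((hds_mem d).1 hd).1 ((hds_mem d).1 hd).2.1 hxd))
      simp [hxS, hx]
  have hchainB : (La ++ [B]).Chain' (Step G) := by
    refine hch.append (by simp) ?_
    intro x hx y hy
    have hx' : Ifin = x := by rw [hlast] at hx; simpa using hx
    have hy' : B = y := by simpa using hy
    rw [← hx', ← hy']
    exact hstep
  refine ⟨La ++ [B], hchainB, ?_, ⟨B, by simp, hwB⟩, ?_, ?_, ?_⟩
  · cases La with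
    | nil => simp at hhead
    | cons a t => simpa using hhead
  · intro K hK
    rcases List.mem_append.1 hK with hK | hK
    · exact houtS K hK
    · have hKB : K = B := by simpa using hK
      subst hKB
      have hIfin_out : Ifin ∩ Sᶜ = I ∩ Sᶜ := houtS Ifin hIfinL
      ext x
      simp only [Set.mem_inter_iff, Set.mem_compl_iff]
      by_cases hxS : x ∈ S
      · simp [hxS]
      · have h1 : x ∈ B ↔ x ∈ Ifin := by
          rw [hB]
          simp only [Set.mem_insert_iff, Set.mem_diff, Set.mem_singleton_iff]
          constructor
          · rintro (rfl | ⟨h, _⟩)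
            · exact absurd hvS hxS
            · exact h
          · intro h
            exact Or.inr ⟨h, fun hw => hxS (hw ▸ hwS)⟩
        have h2 := inter_compl_iff hIfin_out (hxS : x ∉ S)
        simp [hxS, h1, h2]
  · simp
  · have hsum := sum_ncard_le hG ds hds_nodup (fun d hd => ((hds_mem d).1 hd).1)
      (S \ {w, v}) (by
        intro d hd x hx
        refine ⟨hTsubS d ((hds_mem d).1 hd).1 ((hds_mem d).1 hd).2.1 hx, ?_⟩
        rintro (rfl | rfl)
        · exact hxw_out d hd hx
        · exact base_not_mem_side hx)
    have hwvS : ({w, v} : Set V) ⊆ S := by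
      rintro x (rfl | rfl)
      · exact hwS
      · exact hvS
    have hcard : (S \ {w, v}).ncard + 2 = S.ncard := by
      have h := Set.ncard_diff_add_ncard_of_subset hwvS (Set.toFinite S)
      rw [Set.ncard_pair hwvne] at h
      exact h
    simp only [List.length_append, List.length_singleton]
    omega

theorem linear_length_vacate :
    ∃ C : ℕ, ∀ (V : Type) [Fintype V] (G : SimpleGraph V), G.IsTree →
      ∀ I : Set V, IndepSet G I → ∀ w ∈ I, ∀ z, G.Adj w z →
        ¬ RigidOn G (SubtreeSide G z w) I w →
        ∃ L : List (Set V), L.Chain' (Step G) ∧ L.head? = some I ∧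
          (∃ I' : Set V, L.getLast? = some I' ∧ w ∉ I') ∧
          (∀ J ∈ L, J ∩ (SubtreeSide G z w)ᶜ = I ∩ (SubtreeSide G z w)ᶜ) ∧
          L.length ≤ C * ((SubtreeSide G z w).ncard + 1) := by
  refine ⟨1, ?_⟩
  intro V _ G hG I hI w hwI z hwz hnr
  obtain ⟨L, hch, hhd, hlast, hout, h1, h2⟩ :=
    main_vacate ((SubtreeSide G z w).ncard) V G hG w z hwz I hI hwI hnr le_rfl
  exact ⟨L, hch, hhd, hlast, hout, by omega⟩
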